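/- Suppose l is separable, tr is a trace on l with dual bases (e_i), (f_i), and U is an l-bimodule. Then the k-linear map U → U, m ↦ Σ_i e_i·m·f_i, takes its values in the subspace U^l of l-central elements, vanishes on the subspace [l, U], and the induced k-linear map U/[l, U] → U^l is a bijection. -/

import Mathlib

open TensorProduct MulOpposite

variable (k : Type*) [Field k] (l : Type*) [Ring l] [Algebra k l]

/-- Right multiplication, as a `k`-algebra homomorphism `lᵐᵒᵖ →ₐ[k] End_k(l)`. -/
def mulRightAlgHom : lᵐᵒᵖ →ₐ[k] Module.End k l where
  toFun b := LinearMap.mulRight k b.unop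
  map_one' := by ext x; simp
  map_mul' b c := by ext x; simp [mul_assoc]
  map_zero' := by ext x; simp
  map_add' b c := by ext x; simp [mul_add]
  commutes' c := by
    ext x
    simp [Algebra.smul_def, (Algebra.commutes c x).symm]

/-- The `k`-algebra homomorphism `l ⊗[k] lᵐᵒᵖ →ₐ[k] End_k(l)` given by
`a ⊗ bᵒᵖ ↦ (x ↦ a * x * b)`. -/
noncomputable def envHom : (l ⊗[k] lᵐᵒᵖ) →ₐ[k] Module.End k l :=
  Algebra.TensorProduct.lift (Algebra.lmul k l) (mulRightAlgHom k l)
    (fun a b => by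
      ext x
      simp [mulRightAlgHom, Module.End.mul_apply, mul_assoc])

/-- `l` as a module over its enveloping algebra `l ⊗[k] lᵐᵒᵖ`, via `(a ⊗ bᵒᵖ) • x = a * x * b`. -/
noncomputable instance envModule : Module (l ⊗[k] lᵐᵒᵖ) l :=
  Module.compHom l (envHom k l).toRingHom

variable {k l}



lemma env_smul_def (w : l ⊗[k] lᵐᵒᵖ) (x : l) : w • x = envHom k l w x := rfl

lemma tmul_smul_def (a b x : l) : (a ⊗ₜ[k] (op b)) • x = a * (x * b) := by
  rw [env_smul_def]
  simp [envHom, mulRightAlgHom]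

lemma tmul_smul_def' (a : l) (y : lᵐᵒᵖ) (x : l) : (a ⊗ₜ[k] y) • x = a * (x * unop y) := by
  rw [env_smul_def]
  simp [envHom, mulRightAlgHom]

noncomputable def Ld (tr : l →ₗ[k] k) (d : l) : l ⊗[k] lᵐᵒᵖ →ₗ[k] l :=
  TensorProduct.lift (LinearMap.mk₂ k (fun x y => tr (unop y * d) • x)
    (fun x₁ x₂ y => by rw [smul_add])
    (fun c x y => by rw [smul_comm])
    (fun x y₁ y₂ => by simp [add_mul, add_smul])
    (fun c x y => by simp [smul_mul_assoc, mul_smul]))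

@[simp] lemma Ld_tmul (tr : l →ₗ[k] k) (d : l) (x : l) (y : lᵐᵒᵖ) :
    Ld tr d (x ⊗ₜ[k] y) = tr (unop y * d) • x := rfl


lemma expand_e {ι : Type*} [Fintype ι] [DecidableEq ι]
    (tr : l →ₗ[k] k) (e f : Module.Basis ι k l)
    (hdual : ∀ i j, tr (e i * f j) = if i = j then (1 : k) else 0)
    (x : l) : ∑ j, tr (x * f j) • e j = x := by
  have hco : ∀ j, tr (x * f j) = e.repr x j := by
    intro j
    conv_lhs => rw [← e.sum_repr x]
    rw [Finset.sum_mul, map_sum]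
    simp only [smul_mul_assoc, map_smul, hdual, smul_eq_mul]
    simp
  simp only [hco]
  exact e.sum_repr x

lemma expand_f {ι : Type*} [Fintype ι] [DecidableEq ι]
    (tr : l →ₗ[k] k) (e f : Module.Basis ι k l)
    (hdual : ∀ i j, tr (e i * f j) = if i = j then (1 : k) else 0)
    (x : l) : ∑ j, tr (e j * x) • f j = x := by
  have hco : ∀ j, tr (e j * x) = f.repr x j := by
    intro j
    conv_lhs => rw [← f.sum_repr x]
    rw [Finset.mul_sum, map_sum]
    simp only [mul_smul_comm, map_smul, hdual, smul_eq_mul]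
    simp
  simp only [hco]
  exact f.sum_repr x

lemma exists_higman {ι : Type*} [Fintype ι] [DecidableEq ι]
    (tr : l →ₗ[k] k) (hsymm : ∀ a b : l, tr (a * b) = tr (b * a))
    (e f : Module.Basis ι k l)
    (hdual : ∀ i j, tr (e i * f j) = if i = j then (1 : k) else 0)
    (hsep : Module.Projective (l ⊗[k] lᵐᵒᵖ) l) :
    ∃ c : l, (∑ i, e i * c * f i) = 1 ∧ (∑ i, f i * c * e i) = 1 := by
  haveI := hsep
  -- the multiplication map π : l ⊗ lᵐᵒᵖ → l
  let π : (l ⊗[k] lᵐᵒᵖ) →ₗ[l ⊗[k] lᵐᵒᵖ] l :=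
    { toFun := fun w => w • (1 : l)
      map_add' := fun w₁ w₂ => add_smul w₁ w₂ 1
      map_smul' := fun r w => by simp [smul_eq_mul, mul_smul] }
  have hπ_apply : ∀ w : l ⊗[k] lᵐᵒᵖ, π w = w • (1 : l) := fun _ => rfl
  have hπ : Function.Surjective π := by
    intro a
    refine ⟨a ⊗ₜ op 1, ?_⟩
    rw [hπ_apply, tmul_smul_def]
    simp
  obtain ⟨σ, hσ⟩ := Module.projective_lifting_property π LinearMap.id hπ
  set s := σ 1 with hs_def
  have hs1 : s • (1 : l) = 1 := by
    have := LinearMap.congr_fun hσ 1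
    simpa [hπ_apply] using this
  have hcent : ∀ a : l, (a ⊗ₜ[k] op (1 : l)) * s = ((1 : l) ⊗ₜ[k] op a) * s := by
    intro a
    have h1 : σ ((a ⊗ₜ[k] op (1 : l)) • (1 : l)) = (a ⊗ₜ[k] op (1 : l)) * s := by
      rw [map_smul, smul_eq_mul]
    have h2 : σ (((1 : l) ⊗ₜ[k] op a) • (1 : l)) = ((1 : l) ⊗ₜ[k] op a) * s := by
      rw [map_smul, smul_eq_mul]
    rw [tmul_smul_def] at h1 h2
    simp only [mul_one, one_mul] at h1 h2
    rw [← h1, ← h2]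
  set c := Ld tr 1 s with hc_def
  have hA : ∀ (a : l) (w : l ⊗[k] lᵐᵒᵖ), Ld tr 1 ((a ⊗ₜ[k] op (1:l)) * w) = a * Ld tr 1 w := by
    intro a w
    induction w using TensorProduct.induction_on with
    | zero => simp
    | tmul x y =>
        rw [Algebra.TensorProduct.tmul_mul_tmul, Ld_tmul, Ld_tmul]
        simp [mul_smul_comm]
    | add x y hx hy => rw [mul_add, map_add, hx, hy, map_add, mul_add]
  have hB : ∀ (a : l) (w : l ⊗[k] lᵐᵒᵖ), Ld tr 1 (((1:l) ⊗ₜ[k] op a) * w) = Ld tr a w := by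
    intro a w
    induction w using TensorProduct.induction_on with
    | zero => simp
    | tmul x y =>
        rw [Algebra.TensorProduct.tmul_mul_tmul, Ld_tmul, Ld_tmul]
        simp [mul_assoc]
    | add x y hx hy => rw [mul_add, map_add, hx, hy, map_add]
  have key : ∀ a : l, a * c = Ld tr a s := by
    intro a
    rw [hc_def, ← hA a s, hcent a, hB a s]
  -- the two Higman identities
  have hΦ : ∀ w : l ⊗[k] lᵐᵒᵖ, (∑ i, (Ld tr (e i) w) * f i) = w • (1 : l) := by
    intro w
    induction w using TensorProduct.induction_on with
    | zero => simp; rw [← hπ_apply, map_zero]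
    | tmul x y =>
        rw [tmul_smul_def']
        simp only [Ld_tmul, smul_mul_assoc]
        calc ∑ i, tr (unop y * e i) • (x * f i)
            = x * ∑ i, tr (e i * unop y) • f i := by
              rw [Finset.mul_sum]
              congr 1; funext i
              rw [hsymm, mul_smul_comm]
          _ = x * unop y := by rw [expand_f tr e f hdual]
          _ = x * (1 * unop y) := by rw [one_mul]
    | add x y hx hy =>
        simp only [map_add, add_mul, Finset.sum_add_distrib, hx, hy, add_smul]
  have hΨ : ∀ w : l ⊗[k] lᵐᵒᵖ, (∑ i, (Ld tr (f i) w) * e i) = w • (1 : l) := by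
    intro w
    induction w using TensorProduct.induction_on with
    | zero => simp; rw [← hπ_apply, map_zero]
    | tmul x y =>
        rw [tmul_smul_def']
        simp only [Ld_tmul, smul_mul_assoc]
        calc ∑ i, tr (unop y * f i) • (x * e i)
            = x * ∑ i, tr (unop y * f i) • e i := by
              rw [Finset.mul_sum]
              congr 1; funext i
              rw [mul_smul_comm]
          _ = x * unop y := by rw [expand_e tr e f hdual]
          _ = x * (1 * unop y) := by rw [one_mul]
    | add x y hx hy =>
        simp only [map_add, add_mul, Finset.sum_add_distrib, hx, hy, add_smul]
  refine ⟨c, ?_, ?_⟩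
  · calc ∑ i, e i * c * f i = ∑ i, (Ld tr (e i) s) * f i := by
          congr 1; funext i; rw [key]
      _ = s • (1 : l) := hΦ s
      _ = 1 := hs1
  · calc ∑ i, f i * c * e i = ∑ i, (Ld tr (f i) s) * e i := by
          congr 1; funext i; rw [key]
      _ = s • (1 : l) := hΨ s
      _ = 1 := hs1

section Uside

variable {k : Type*} [Field k] {l : Type*} [Ring l] [Algebra k l]

lemma smul_comm_k' {A : Type*} [Ring A] [Algebra k A] {V : Type*} [AddCommGroup V]
    [Module k V] [Module A V] [IsScalarTower k A V] (c : k) (a : A) (u : V) :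
    a • (c • u) = c • (a • u) := by
  rw [← algebraMap_smul A c u, ← mul_smul, ← Algebra.commutes, mul_smul, algebraMap_smul]

variable {ι : Type*} [Fintype ι] [DecidableEq ι]
  (tr : l →ₗ[k] k) (e f : Module.Basis ι k l)
  {U : Type*} [AddCommGroup U] [Module k U] [Module l U] [Module lᵐᵒᵖ U]
  [IsScalarTower k l U] [IsScalarTower k lᵐᵒᵖ U] [SMulCommClass l lᵐᵒᵖ U]

lemma smul_expand_left (hdual : ∀ i j, tr (e i * f j) = if i = j then (1 : k) else 0)
    (x : l) (w : U) : x • w = ∑ j, tr (x * f j) • (e j • w) := by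
  conv_lhs => rw [← expand_e tr e f hdual x]
  rw [Finset.sum_smul]
  exact Finset.sum_congr rfl fun j _ => smul_assoc _ _ _

lemma smul_expand_right (hdual : ∀ i j, tr (e i * f j) = if i = j then (1 : k) else 0)
    (x : l) (w : U) : (op x : lᵐᵒᵖ) • w = ∑ j, tr (e j * x) • ((op (f j) : lᵐᵒᵖ) • w) := by
  have hx : (op x : lᵐᵒᵖ) = ∑ j, tr (e j * x) • (op (f j) : lᵐᵒᵖ) := by
    conv_lhs => rw [← expand_f tr e f hdual x]
    rw [Finset.op_sum]
    exact Finset.sum_congr rfl fun j _ => op_smul _ _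
  rw [hx, Finset.sum_smul]
  exact Finset.sum_congr rfl fun j _ => smul_assoc _ _ _

lemma swapA (hsymm : ∀ a b : l, tr (a * b) = tr (b * a))
    (hdual : ∀ i j, tr (e i * f j) = if i = j then (1 : k) else 0) (a : l) (u : U) :
    ∑ i, (a * e i) • ((op (f i) : lᵐᵒᵖ) • u)
      = ∑ i, e i • ((op (f i * a) : lᵐᵒᵖ) • u) := by
  calc ∑ i, (a * e i) • ((op (f i) : lᵐᵒᵖ) • u)
      = ∑ i, ∑ j, tr (a * e i * f j) • (e j • ((op (f i) : lᵐᵒᵖ) • u)) := by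
        refine Finset.sum_congr rfl fun i _ => ?_
        rw [smul_expand_left tr e f hdual (a * e i)]
    _ = ∑ j, ∑ i, tr (a * e i * f j) • (e j • ((op (f i) : lᵐᵒᵖ) • u)) := Finset.sum_comm
    _ = ∑ i, e i • ((op (f i * a) : lᵐᵒᵖ) • u) := by
        refine (Finset.sum_congr rfl fun i _ => ?_).symm
        rw [smul_expand_right tr e f hdual (f i * a), Finset.smul_sum]
        refine Finset.sum_congr rfl fun j _ => ?_
        rw [smul_comm_k']
        congr 1
        rw [← mul_assoc, hsymm, ← mul_assoc]

lemma swapB (hsymm : ∀ a b : l, tr (a * b) = tr (b * a))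
    (hdual : ∀ i j, tr (e i * f j) = if i = j then (1 : k) else 0) (a : l) (u : U) :
    ∑ i, (e i * a) • ((op (f i) : lᵐᵒᵖ) • u)
      = ∑ i, e i • ((op (a * f i) : lᵐᵒᵖ) • u) := by
  calc ∑ i, (e i * a) • ((op (f i) : lᵐᵒᵖ) • u)
      = ∑ i, ∑ j, tr (e i * a * f j) • (e j • ((op (f i) : lᵐᵒᵖ) • u)) := by
        refine Finset.sum_congr rfl fun i _ => ?_
        rw [smul_expand_left tr e f hdual (e i * a)]
    _ = ∑ j, ∑ i, tr (e i * a * f j) • (e j • ((op (f i) : lᵐᵒᵖ) • u)) := Finset.sum_comm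
    _ = ∑ i, e i • ((op (a * f i) : lᵐᵒᵖ) • u) := by
        refine (Finset.sum_congr rfl fun i _ => ?_).symm
        rw [smul_expand_right tr e f hdual (a * f i), Finset.smul_sum]
        refine Finset.sum_congr rfl fun j _ => ?_
        rw [smul_comm_k']
        congr 1
        rw [← mul_assoc]

end Uside

/-- Suppose `l` is separable (i.e. projective over its enveloping algebra `l ⊗[k] lᵐᵒᵖ`),
`tr` is a trace on `l` with dual bases `(e i)`, `(f i)`, and `U` is an `l`-bimodule.
Then the map `U → U`, `m ↦ Σ i, e i • m • f i` takes values in the subspace `U^l` of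
`l`-central elements, vanishes on `[l, U]`, and the induced map `U/[l, U] → U^l` is a
bijection. -/
theorem statement_4 [FiniteDimensional k l] {ι : Type*} [Fintype ι] [DecidableEq ι]
    (tr : l →ₗ[k] k)
    (hsymm : ∀ a b : l, tr (a * b) = tr (b * a))
    (hndl : ∀ a : l, (∀ b : l, tr (a * b) = 0) → a = 0)
    (hndr : ∀ b : l, (∀ a : l, tr (a * b) = 0) → b = 0)
    (e f : Module.Basis ι k l)
    (hdual : ∀ i j, tr (e i * f j) = if i = j then (1 : k) else 0)
    (hsep : Module.Projective (l ⊗[k] lᵐᵒᵖ) l)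
    {U : Type*} [AddCommGroup U] [Module k U] [Module l U] [Module lᵐᵒᵖ U]
    [IsScalarTower k l U] [IsScalarTower k lᵐᵒᵖ U] [SMulCommClass l lᵐᵒᵖ U] :
    -- the averaging map takes values in the `l`-central elements `U^l`
    (∀ (u : U) (a : l),
      a • (∑ i, e i • (op (f i) • u)) = op a • (∑ i, e i • (op (f i) • u))) ∧
    -- it vanishes on the subspace `[l, U]` spanned by commutators
    (∀ u ∈ Submodule.span k {w : U | ∃ (a : l) (v : U), w = a • v - op a • v},
      (∑ i, e i • (op (f i) • u)) = 0) ∧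
    -- the induced map `U/[l, U] → U^l` is surjective ...
    (∀ u : U, (∀ a : l, a • u = op a • u) → ∃ v : U, (∑ i, e i • (op (f i) • v)) = u) ∧
    -- ... and injective
    (∀ u : U, (∑ i, e i • (op (f i) • u)) = 0 →
      u ∈ Submodule.span k {w : U | ∃ (a : l) (v : U), w = a • v - op a • v}) := by
  obtain ⟨c, hβ, hβ'⟩ := exists_higman tr hsymm e f hdual hsep
  refine ⟨?_, ?_, ?_, ?_⟩
  · -- Part 1 : values are central
    intro u a
    calc a • ∑ i, e i • (op (f i) • u)
        = ∑ i, (a * e i) • (op (f i) • u) := by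
          rw [Finset.smul_sum]
          exact Finset.sum_congr rfl fun i _ => (mul_smul a (e i) _).symm
      _ = ∑ i, e i • ((op (f i * a) : lᵐᵒᵖ) • u) := swapA tr e f hsymm hdual a u
      _ = op a • ∑ i, e i • (op (f i) • u) := by
          rw [Finset.smul_sum]
          refine Finset.sum_congr rfl fun i _ => ?_
          rw [op_mul, mul_smul, smul_comm]
  · -- Part 2 : vanishes on commutators
    intro u hu
    induction hu using Submodule.span_induction with
    | mem x hx =>
        obtain ⟨a, v, rfl⟩ := hx
        have h1 : ∀ i : ι, e i • ((op (f i) : lᵐᵒᵖ) • (a • v - op a • v))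
            = (e i * a) • (op (f i) • v) - e i • ((op (a * f i) : lᵐᵒᵖ) • v) := by
          intro i
          rw [smul_sub, smul_sub]
          congr 1
          · rw [mul_smul]
            congr 1
            exact (smul_comm a (op (f i)) v).symm
          · rw [op_mul, mul_smul]
        rw [Finset.sum_congr rfl fun i _ => h1 i, Finset.sum_sub_distrib,
          swapB tr e f hsymm hdual a v, sub_self]
    | zero => simp
    | add x y _ _ hx hy =>
        simp only [smul_add, Finset.sum_add_distrib, hx, hy, add_zero]
    | smul r x _ hx =>
        have h1 : ∀ i : ι, e i • ((op (f i) : lᵐᵒᵖ) • (r • x))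
            = r • (e i • ((op (f i) : lᵐᵒᵖ) • x)) := by
          intro i
          rw [smul_comm_k' r, smul_comm_k' r]
        rw [Finset.sum_congr rfl fun i _ => h1 i, ← Finset.smul_sum, hx, smul_zero]
  · -- Part 3 : surjectivity
    intro u hu
    refine ⟨(op c : lᵐᵒᵖ) • u, ?_⟩
    calc ∑ i, e i • (op (f i) • ((op c : lᵐᵒᵖ) • u))
        = ∑ i, (e i * c * f i) • u := by
          refine Finset.sum_congr rfl fun i _ => ?_
          rw [← mul_smul, ← op_mul, ← hu (c * f i), ← mul_smul, ← mul_assoc]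
      _ = (∑ i, e i * c * f i) • u := Finset.sum_smul.symm
      _ = u := by rw [hβ, one_smul]
  · -- Part 4 : injectivity
    intro u hT
    have hsum0 : ∑ i, (c * e i) • ((op (f i) : lᵐᵒᵖ) • u) = 0 := by
      calc ∑ i, (c * e i) • ((op (f i) : lᵐᵒᵖ) • u)
          = c • ∑ i, e i • (op (f i) • u) := by
            rw [Finset.smul_sum]
            exact Finset.sum_congr rfl fun i _ => mul_smul c (e i) _
        _ = 0 := by rw [hT, smul_zero]
    have hu1 : u = ∑ i, (op (f i * c * e i) : lᵐᵒᵖ) • u := by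
      rw [← Finset.sum_smul, ← Finset.op_sum, hβ', op_one, one_smul]
    have hkey : u = ∑ i, ((op (c * e i) : lᵐᵒᵖ) • ((op (f i) : lᵐᵒᵖ) • u)
        - (c * e i) • ((op (f i) : lᵐᵒᵖ) • u)) := by
      rw [Finset.sum_sub_distrib, hsum0, sub_zero]
      conv_lhs => rw [hu1]
      refine Finset.sum_congr rfl fun i _ => ?_
      rw [← mul_smul, ← op_mul, mul_assoc]
    rw [hkey]
    refine Submodule.sum_mem _ fun i _ => ?_
    rw [show (op (c * e i) : lᵐᵒᵖ) • ((op (f i) : lᵐᵒᵖ) • u)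
        - (c * e i) • ((op (f i) : lᵐᵒᵖ) • u)
        = -((c * e i) • ((op (f i) : lᵐᵒᵖ) • u)
          - (op (c * e i) : lᵐᵒᵖ) • ((op (f i) : lᵐᵒᵖ) • u)) from (neg_sub _ _).symm]
    exact Submodule.neg_mem _
      (Submodule.subset_span ⟨c * e i, (op (f i) : lᵐᵒᵖ) • u, rfl⟩)
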